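/- Fix complex vector spaces $V_0 = \mathbb{C}^n$, $V_1 = \mathbb{C}^m$ and integers $r \ge s \ge 0$; set $\delta = \max(m-n+r-s, 0)$. Let $(f, g)$ be any pair with $f\colon V_0 \to V_1$ of rank $\le m - \delta$ and $g\colon V_1 \to V_0$, and let $\lambda_1, \ldots, \lambda_{m-\delta}$ be the roots (with multiplicity) of $\bar{\chi}(u) = u^{-\delta}\det(u - fg)$ in any chosen order. Then there exist chains of subspaces $F_{r-s} \subset F_{r-s+1} \subset \cdots \subset F_{r-s+m-\delta} \subseteq V_0$ and $0 = G_0 \subset G_1 \subset \cdots \subset G_{m-\delta} \subseteq V_1$ with $\dim F_{r-s+i} = r-s+i$ and $\dim G_i = i$, such that $f(F_{r-s+i}) \subseteq G_i$ and $g(G_i) \subseteq F_{r-s+i}$ for all $i \ge 0$, and $fg$ acts on $G_i/G_{i-1}$ by the scalar $\lambda_i$ for $1 \le i \le m-\delta$. -/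

import Mathlib

open Polynomial Module LinearMap

section CharpolyMul

variable {K : Type*} [Field K] {V : Type*} [AddCommGroup V] [Module K V] [FiniteDimensional K V]

theorem my_charpoly_eq_mul (E : V →ₗ[K] V) (p : Submodule K V) (hp : ∀ x ∈ p, E x ∈ p) :
    E.charpoly = (E.restrict hp).charpoly *
      (p.mapQ p E (fun x hx => hp x hx)).charpoly := by
  obtain ⟨q, hq⟩ := p.exists_isCompl
  set e := Submodule.prodEquivOfIsCompl p q hq with he
  set bp := Module.finBasis K p
  set bq := Module.finBasis K q
  set b : Basis _ K V := (bp.prod bq).map e with hb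
  set eQ : (V ⧸ p) ≃ₗ[K] q := Submodule.quotientEquivOfIsCompl p q hq with heQ
  set bQ := bq.map eQ.symm with hbQ
  have hbinl : ∀ j, b (Sum.inl j) = (bp j : V) := by
    intro j
    have h1 : (bp.prod bq) (Sum.inl j) = ((bp j : p), (0 : q)) := by
      apply Prod.ext <;> simp
    rw [hb, Basis.map_apply, h1, he, Submodule.coe_prodEquivOfIsCompl']
    simp
  have hbinr : ∀ j, b (Sum.inr j) = (bq j : V) := by
    intro j
    have h1 : (bp.prod bq) (Sum.inr j) = ((0 : p), (bq j : q)) := by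
      apply Prod.ext <;> simp
    rw [hb, Basis.map_apply, h1, he, Submodule.coe_prodEquivOfIsCompl']
    simp
  have hrepr : ∀ x : V, ∀ i, b.repr x i =
      Sum.elim (fun i => bp.repr (e.symm x).1 i) (fun i => bq.repr (e.symm x).2 i) i := by
    intro x i
    rw [hb, Basis.map_repr]
    cases i with
    | inl i => simp [Basis.prod_repr_inl]
    | inr i => simp [Basis.prod_repr_inr]
  have hsymm_left : ∀ (x : p), e.symm (x : V) = (x, 0) := by
    intro x
    rw [he]
    simp
  -- key quotient fact
  have hquot : ∀ y : V, eQ (Submodule.Quotient.mk y) = (e.symm y).2 := by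
    intro y
    have hy : y = ((e.symm y).1 : V) + ((e.symm y).2 : V) := by
      conv_lhs => rw [← e.apply_symm_apply y]
      rw [Submodule.coe_prodEquivOfIsCompl']
    have : (Submodule.Quotient.mk y : V ⧸ p) = Submodule.Quotient.mk ((e.symm y).2 : V) := by
      conv_lhs => rw [hy]
      rw [Submodule.Quotient.mk_add]
      have h0 : (Submodule.Quotient.mk ((e.symm y).1 : V) : V ⧸ p) = 0 :=
        (Submodule.Quotient.mk_eq_zero _).2 (e.symm y).1.2
      rw [h0, zero_add]
    rw [this, heQ]
    simp
  set M := LinearMap.toMatrix b b E with hM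
  have h21 : M.toBlocks₂₁ = 0 := by
    ext i j
    simp only [Matrix.toBlocks₂₁, Matrix.of_apply, hM, LinearMap.toMatrix_apply,
      Matrix.zero_apply]
    rw [hbinl, hrepr]
    have hEp : E (bp j : V) ∈ p := hp _ (bp j).2
    simp [hsymm_left ⟨E (bp j : V), hEp⟩]
  have h11 : M.toBlocks₁₁ = LinearMap.toMatrix bp bp (E.restrict hp) := by
    ext i j
    simp only [Matrix.toBlocks₁₁, Matrix.of_apply, hM, LinearMap.toMatrix_apply]
    rw [hbinl, hrepr]
    have hEp : E (bp j : V) ∈ p := hp _ (bp j).2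
    simp only [Sum.elim_inl, hsymm_left ⟨E (bp j : V), hEp⟩]
    congr 1
  have h22 : M.toBlocks₂₂ = LinearMap.toMatrix bQ bQ (p.mapQ p E (fun x hx => hp x hx)) := by
    ext i j
    simp only [Matrix.toBlocks₂₂, Matrix.of_apply, hM, LinearMap.toMatrix_apply]
    rw [hbinr, hrepr]
    have hbQj : bQ j = Submodule.Quotient.mk (bq j : V) := by
      rw [hbQ, Basis.map_apply, heQ]
      simp
    have hmapQ : (p.mapQ p E (fun x hx => hp x hx)) (bQ j) =
        Submodule.Quotient.mk (E (bq j : V)) := by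
      rw [hbQj, Submodule.mapQ_apply]
    rw [hmapQ]
    have : bQ.repr (Submodule.Quotient.mk (E (bq j : V))) i
        = bq.repr (eQ (Submodule.Quotient.mk (E (bq j : V)))) i := by
      rw [hbQ, Basis.map_repr]
      simp
    rw [this, hquot]
    simp
  have hchar : E.charpoly = M.charpoly := (LinearMap.charpoly_toMatrix E b).symm
  rw [hchar, ← Matrix.fromBlocks_toBlocks M, h21, h11, h22,
    Matrix.charpoly_fromBlocks_zero₂₁, LinearMap.charpoly_toMatrix,
    LinearMap.charpoly_toMatrix]

end CharpolyMul

section Helpers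

variable {K : Type*} [Field K] {V : Type*} [AddCommGroup V] [Module K V] [FiniteDimensional K V]

theorem my_charpoly_range_le (E : V →ₗ[K] V) (p : Submodule K V)
    (hr : LinearMap.range E ≤ p) :
    E.charpoly = (E.restrict (fun x _ => hr (LinearMap.mem_range_self E x))).charpoly *
      X ^ (finrank K V - finrank K p) := by
  have hp : ∀ x ∈ p, E x ∈ p := fun x _ => hr (LinearMap.mem_range_self E x)
  have h0 : p.mapQ p E (fun x hx => hp x hx) = 0 := by
    apply Submodule.linearMap_qext
    ext x
    simp only [LinearMap.comp_apply, Submodule.mkQ_apply, Submodule.mapQ_apply,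
      LinearMap.zero_apply, LinearMap.zero_comp]
    rw [Submodule.Quotient.mk_eq_zero]
    exact hr (LinearMap.mem_range_self E x)
  have h1 : (p.mapQ p E (fun x hx => hp x hx)).charpoly = X ^ finrank K (V ⧸ p) := by
    rw [h0]
    exact IsNilpotent.charpoly_eq_X_pow_finrank (φ := (0 : Module.End K (V ⧸ p))) ⟨1, by simp⟩
  have h2 : finrank K (V ⧸ p) + finrank K p = finrank K V :=
    Submodule.finrank_quotient_add_finrank p
  rw [my_charpoly_eq_mul E p hp, h1]
  congr 2
  omega

theorem my_exists_eigenvector (E : V →ₗ[K] V) (μ : K) (h : E.charpoly.eval μ = 0) :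
    ∃ v : V, v ≠ 0 ∧ E v = μ • v := by
  classical
  set b := Module.finBasis K V
  set M := LinearMap.toMatrix b b E with hM
  have hchar : M.charpoly.eval μ = 0 := by
    rw [hM, LinearMap.charpoly_toMatrix]
    exact h
  have hdet : (Matrix.scalar _ μ - M).det = 0 := by
    have := _root_.eval_det (Matrix.charmatrix M) μ
    rw [Matrix.matPolyEquiv_charmatrix] at this
    rw [Matrix.charpoly] at hchar
    rw [this] at hchar
    simpa using hchar
  have hlin : LinearMap.det (μ • (LinearMap.id : V →ₗ[K] V) - E) = 0 := by
    rw [← LinearMap.det_toMatrix b, map_sub]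
    have : LinearMap.toMatrix b b (μ • (LinearMap.id : V →ₗ[K] V)) = Matrix.scalar _ μ := by
      rw [map_smul, LinearMap.toMatrix_id]
      ext i j
      simp [Matrix.scalar_apply, Matrix.one_apply, Matrix.diagonal]
    rw [this]
    exact hdet
  obtain ⟨v, hv, hv0⟩ := Submodule.exists_mem_ne_zero_of_ne_bot
    (LinearMap.bot_lt_ker_of_det_eq_zero hlin).ne'
  refine ⟨v, hv0, ?_⟩
  have := LinearMap.mem_ker.mp hv
  simp only [LinearMap.sub_apply, LinearMap.smul_apply, LinearMap.id_apply] at this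
  exact (sub_eq_zero.mp this).symm

theorem my_charpoly_dim_one {W : Type*} [AddCommGroup W] [Module K W] [FiniteDimensional K W]
    (E : W →ₗ[K] W) (hdim : finrank K W = 1) (μ : K) (hE : ∀ x, E x = μ • x) :
    E.charpoly = X - C μ := by
  classical
  set b := Module.finBasisOfFinrankEq K W hdim
  have h1 : E.charpoly = (LinearMap.toMatrix b b E).charpoly :=
    (LinearMap.charpoly_toMatrix E b).symm
  have h2 : (LinearMap.toMatrix b b E) 0 0 = μ := by
    rw [LinearMap.toMatrix_apply, hE]
    simp
  rw [h1, Matrix.charpoly, Matrix.det_fin_one, Matrix.charmatrix_apply_eq, h2]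

end Helpers

section Helpers2

variable {K : Type*} [Field K] {V : Type*} [AddCommGroup V] [Module K V] [FiniteDimensional K V]

theorem my_exists_between {B A : Submodule K V} (hBA : B ≤ A) {d : ℕ}
    (h1 : finrank K B ≤ d) (h2 : d ≤ finrank K A) :
    ∃ C, B ≤ C ∧ C ≤ A ∧ finrank K C = d := by
  induction d, h1 using Nat.le_induction with
  | base => exact ⟨B, le_rfl, hBA, rfl⟩
  | succ d hd ih =>
    obtain ⟨C, hBC, hCA, hC⟩ := ih (by omega)
    have hlt : finrank K C < finrank K A := by omega
    have hCA' : C < A := lt_of_le_of_ne hCA (fun h => by rw [h] at hlt; omega)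
    obtain ⟨x, hxA, hxC⟩ := SetLike.exists_of_lt hCA'
    have hx0 : x ≠ 0 := fun h => hxC (h ▸ C.zero_mem)
    have hinf : C ⊓ (K ∙ x) = ⊥ := by
      rw [eq_bot_iff]
      rintro y ⟨hyC, hySpan⟩
      obtain ⟨c, rfl⟩ := Submodule.mem_span_singleton.mp hySpan
      rcases eq_or_ne c 0 with rfl | hc
      · simp
      · exact absurd (by simpa [hc] using C.smul_mem c⁻¹ hyC) hxC
    have hsum := Submodule.finrank_sup_add_finrank_inf_eq C (K ∙ x)
    rw [hinf, finrank_bot, hC, finrank_span_singleton hx0] at hsum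
    exact ⟨C ⊔ (K ∙ x), le_trans hBC le_sup_left,
      sup_le hCA ((Submodule.span_singleton_le_iff_mem x A).mpr hxA), by omega⟩

theorem my_finrank_comap {V' : Type*} [AddCommGroup V'] [Module K V'] [FiniteDimensional K V']
    (φ : V →ₗ[K] V') (q : Submodule K V') :
    finrank K (q.comap φ) =
      finrank K ((q ⊓ LinearMap.range φ : Submodule K V')) + finrank K (LinearMap.ker φ) := by
  set A := q.comap φ
  set ψ := φ.comp A.subtype
  have h1 : finrank K (LinearMap.range ψ) + finrank K (LinearMap.ker ψ) = finrank K A :=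
    LinearMap.finrank_range_add_finrank_ker ψ
  have h2 : LinearMap.range ψ = q ⊓ LinearMap.range φ := by
    rw [LinearMap.range_comp, Submodule.range_subtype]
    rw [Submodule.map_comap_eq φ q, inf_comm]
  have hker : LinearMap.ker φ ≤ A := fun x hx => by
    simp only [A, Submodule.mem_comap, LinearMap.mem_ker.mp hx, q.zero_mem]
  have h3 : finrank K (LinearMap.ker ψ) = finrank K (LinearMap.ker φ) := by
    have : LinearMap.ker ψ = (LinearMap.ker φ).comap A.subtype := by
      rw [LinearMap.ker_comp]
    rw [this]
    exact LinearEquiv.finrank_eq (Submodule.comapSubtypeEquivOfLe hker)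
  rw [← h1, h2, h3]

end Helpers2

section Flag

variable {K : Type*} [Field K]

theorem my_flag : ∀ (k : ℕ) {V : Type*} [AddCommGroup V] [Module K V] [FiniteDimensional K V]
    (E : V →ₗ[K] V) (lam : Fin k → K),
    E.charpoly = ∏ i, (X - C (lam i)) →
    ∃ G : Fin (k+1) → Submodule K V, Monotone G ∧ G 0 = ⊥ ∧ G (Fin.last k) = ⊤ ∧
      (∀ i, finrank K (G i) = (i : ℕ)) ∧
      (∀ i : Fin k, ∀ x ∈ G i.succ, E x - lam i • x ∈ G i.castSucc) := by
  intro k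
  induction k with
  | zero =>
    intro V _ _ _ E lam hE
    have hdeg : E.charpoly.natDegree = finrank K V := E.charpoly_natDegree
    rw [hE] at hdeg
    simp only [Finset.univ_eq_empty, Finset.prod_empty, natDegree_one] at hdeg
    have hsub : Subsingleton V := finrank_zero_iff.mp hdeg.symm
    refine ⟨fun _ => ⊥, monotone_const, rfl, ?_, ?_, ?_⟩
    · exact Subsingleton.elim _ _
    · intro i
      have : (i : ℕ) = 0 := by omega
      simp [this]
    · intro i; exact i.elim0
  | succ k ih =>
    intro V _ _ _ E lam hE
    set μ := lam 0 with hμ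
    have hroot : E.charpoly.eval μ = 0 := by
      rw [hE, eval_prod]
      exact Finset.prod_eq_zero (Finset.mem_univ 0) (by simp [hμ])
    obtain ⟨v, hv0, hvE⟩ := my_exists_eigenvector E μ hroot
    set p : Submodule K V := K ∙ v with hpdef
    have hEp : ∀ x ∈ p, E x = μ • x := by
      intro x hx
      obtain ⟨c, rfl⟩ := Submodule.mem_span_singleton.mp hx
      rw [map_smul, hvE, smul_comm]
    have hp : ∀ x ∈ p, E x ∈ p := by
      intro x hx
      rw [hEp x hx]
      exact p.smul_mem μ hx
    have hdim_p : finrank K p = 1 := finrank_span_singleton hv0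
    have hEr_char : (E.restrict hp).charpoly = X - C μ := by
      refine my_charpoly_dim_one _ hdim_p μ ?_
      intro x
      apply Subtype.ext
      rw [LinearMap.restrict_coe_apply]
      rw [hEp x x.2]
      rfl
    set EQ := p.mapQ p E (fun x hx => hp x hx) with hEQ
    have hEQ_char : EQ.charpoly = ∏ i : Fin k, (X - C (lam i.succ)) := by
      have h1 := my_charpoly_eq_mul E p hp
      rw [hEr_char, hE, Fin.prod_univ_succ] at h1
      exact mul_left_cancel₀ (X_sub_C_ne_zero μ) h1.symm
    obtain ⟨G', hmono', hbot', htop', hrank', hsc'⟩ := ih EQ (fun i => lam i.succ) hEQ_char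
    set G : Fin (k+2) → Submodule K V :=
      Fin.cases ⊥ (fun i => (G' i).comap p.mkQ) with hG
    have hG0 : G 0 = ⊥ := rfl
    have hGsucc : ∀ i : Fin (k+1), G i.succ = (G' i).comap p.mkQ := fun i => by
      simp [hG]
    have hmono : Monotone G := by
      rw [Fin.monotone_iff_le_succ]
      intro i
      induction i using Fin.cases with
      | zero =>
        rw [Fin.castSucc_zero, hG0]
        exact bot_le
      | succ j =>
        rw [← Fin.succ_castSucc, hGsucc, hGsucc]
        exact Submodule.comap_mono (hmono' (Fin.castSucc_le_succ j))
    have hrank : ∀ i : Fin (k+2), finrank K (G i) = (i : ℕ) := by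
      intro i
      induction i using Fin.cases with
      | zero => simp [hG0]
      | succ j =>
        rw [hGsucc, my_finrank_comap, Submodule.range_mkQ, Submodule.ker_mkQ, inf_top_eq,
          hrank', hdim_p, Fin.val_succ]
    have htop : G (Fin.last (k+1)) = ⊤ := by
      rw [← Fin.succ_last, hGsucc, htop', Submodule.comap_top]
    refine ⟨G, hmono, hG0, htop, hrank, ?_⟩
    intro i x hx
    induction i using Fin.cases with
    | zero =>
      have hxp : x ∈ p := by
        rw [hGsucc, hbot'] at hx
        simpa [Submodule.comap_bot, Submodule.ker_mkQ] using hx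
      rw [Fin.castSucc_zero, hG0, ← hμ, hEp x hxp, sub_self]
      exact Submodule.zero_mem ⊥
    | succ j =>
      rw [hGsucc] at hx
      have hx' : p.mkQ x ∈ G' j.succ := hx
      have := hsc' j (p.mkQ x) hx'
      have hmk : p.mkQ (E x - lam j.succ • x) = EQ (p.mkQ x) - lam j.succ • p.mkQ x := by
        simp only [map_sub, map_smul, hEQ, Submodule.mkQ_apply, Submodule.mapQ_apply]
      rw [← Fin.succ_castSucc, hGsucc]
      show p.mkQ (E x - lam j.succ • x) ∈ G' j.castSucc
      rw [hmk]
      exact this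
  
end Flag

section MainAux

set_option maxHeartbeats 1000000

open Polynomial Module LinearMap

theorem stmt14_aux (n m r s δ k : ℕ) (hrs : s ≤ r) (hδ : δ = m + r - (n + s))
    (hk : k = m - δ)
    (f : (Fin n → ℂ) →ₗ[ℂ] (Fin m → ℂ)) (g : (Fin m → ℂ) →ₗ[ℂ] (Fin n → ℂ))
    (hrank : finrank ℂ (LinearMap.range f) ≤ k)
    (lam : Fin k → ℂ)
    (hchi : (f ∘ₗ g).charpoly = X ^ δ * ∏ i : Fin k, (X - C (lam i))) :
    ∃ (F : Fin (k + 1) → Submodule ℂ (Fin n → ℂ))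
      (G : Fin (k + 1) → Submodule ℂ (Fin m → ℂ)),
      Monotone F ∧ Monotone G ∧ G 0 = ⊥ ∧
      (∀ i, finrank ℂ (F i) = (r - s) + (i : ℕ)) ∧
      (∀ i, finrank ℂ (G i) = (i : ℕ)) ∧
      (∀ i, Submodule.map f (F i) ≤ G i) ∧
      (∀ i, Submodule.map g (G i) ≤ F i) ∧
      (∀ i : Fin k, ∀ x ∈ G i.succ, f (g x) - lam i • x ∈ G i.castSucc) := by
  classical
  set W := LinearMap.range f with hW
  set h := f ∘ₗ g with hh
  have hfinm : finrank ℂ (Fin m → ℂ) = m := Module.finrank_fin_fun ℂ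
  have hfinn : finrank ℂ (Fin n → ℂ) = n := Module.finrank_fin_fun ℂ
  have hprod_monic : (∏ i : Fin k, (X - C (lam i))).Monic :=
    monic_prod_of_monic _ _ (fun i _ => monic_X_sub_C (lam i))
  have hdeg2 : m = δ + k := by
    have h1 : h.charpoly.natDegree = m := by rw [LinearMap.charpoly_natDegree, hfinm]
    rw [hchi, natDegree_mul (pow_ne_zero δ X_ne_zero) hprod_monic.ne_zero,
      natDegree_X_pow, natDegree_prod _ _ (fun i _ => X_sub_C_ne_zero (lam i))] at h1
    simp only [natDegree_X_sub_C, Finset.sum_const, Finset.card_univ, Fintype.card_fin,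
      smul_eq_mul, mul_one] at h1
    omega
  have hrsk : r - s + k ≤ n := by omega
  have hkm : k ≤ m := by omega
  have hker : finrank ℂ W + finrank ℂ (LinearMap.ker f) = n := by
    have h1 := LinearMap.finrank_range_add_finrank_ker f
    rw [hfinn] at h1
    exact h1
  obtain ⟨U, hWU, -, hUrank⟩ :=
    my_exists_between (le_top : W ≤ ⊤) hrank (by rw [finrank_top, hfinm]; exact hkm)
  have hrange : LinearMap.range h ≤ U := by
    rintro y ⟨x, rfl⟩
    exact hWU ⟨g x, rfl⟩
  set E := h.restrict (fun x _ => hrange (LinearMap.mem_range_self h x)) with hE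
  have hEchar : E.charpoly = ∏ i : Fin k, (X - C (lam i)) := by
    have h1 := my_charpoly_range_le h U hrange
    rw [hchi] at h1
    have hδmk : finrank ℂ (Fin m → ℂ) - finrank ℂ U = δ := by rw [hfinm, hUrank]; omega
    rw [hδmk] at h1
    have h2 : E.charpoly * X ^ δ = (∏ i : Fin k, (X - C (lam i))) * X ^ δ := by
      rw [← h1, mul_comm]
    exact mul_right_cancel₀ (pow_ne_zero δ X_ne_zero) h2
  obtain ⟨G', hmono', hbot', htop', hrank', hsc'⟩ := my_flag k E lam hEchar
  set G : Fin (k+1) → Submodule ℂ (Fin m → ℂ) := fun i => (G' i).map U.subtype with hGdef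
  have hGmono : Monotone G := fun i j hij => Submodule.map_mono (hmono' hij)
  have hG0 : G 0 = ⊥ := by rw [hGdef]; simp [hbot']
  have hGrank : ∀ i, finrank ℂ (G i) = (i : ℕ) := by
    intro i
    rw [hGdef]
    simp only
    rw [Submodule.finrank_map_subtype_eq]
    exact hrank' i
  have hGle : ∀ i, G i ≤ U := fun i => Submodule.map_subtype_le U (G' i)
  have hGsc : ∀ i : Fin k, ∀ x ∈ G i.succ, h x - lam i • x ∈ G i.castSucc := by
    intro i x hx
    obtain ⟨y, hy, rfl⟩ := hx
    have hE1 := hsc' i y hy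
    refine ⟨E y - lam i • y, hE1, ?_⟩
    simp [hE, LinearMap.restrict_coe_apply]
  have hinv' : ∀ i, ∀ y ∈ G' i, E y ∈ G' i := by
    intro i
    induction i using Fin.cases with
    | zero =>
      intro y hy
      rw [hbot', Submodule.mem_bot] at hy
      rw [hbot', Submodule.mem_bot, hy, map_zero]
    | succ j =>
      intro y hy
      have h1 : E y = (E y - lam j • y) + lam j • y := by abel
      rw [h1]
      exact Submodule.add_mem _ (hmono' (Fin.castSucc_le_succ j) (hsc' j y hy))
        (Submodule.smul_mem _ _ hy)
  have hGinv : ∀ i, Submodule.map h (G i) ≤ G i := by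
    rintro i y ⟨x, hx, rfl⟩
    obtain ⟨z, hz, rfl⟩ := hx
    refine ⟨E z, hinv' i z hz, ?_⟩
    simp [hE, LinearMap.restrict_coe_apply]
  set Gn : ℕ → Submodule ℂ (Fin m → ℂ) := fun i => G ⟨min i k, by omega⟩ with hGn
  have hGn_eq : ∀ i : Fin (k+1), Gn (i : ℕ) = G i := by
    intro i
    have hlt := i.isLt
    have h1 : (⟨min (i : ℕ) k, by omega⟩ : Fin (k+1)) = i := by
      apply Fin.ext
      show min (i : ℕ) k = (i : ℕ)
      omega
    show G ⟨min (i : ℕ) k, by omega⟩ = G i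
    rw [h1]
  have hGn_mono : ∀ i j, i ≤ j → Gn i ≤ Gn j := by
    intro i j hij
    apply hGmono
    rw [Fin.le_def]
    show min i k ≤ min j k
    omega
  have hGn_rank : ∀ i, i ≤ k → finrank ℂ (Gn i) = i := by
    intro i hi
    have h1 := hGrank ⟨min i k, by omega⟩
    have h2 : ((⟨min i k, by omega⟩ : Fin (k+1)) : ℕ) = i := by
      show min i k = i
      omega
    rw [h2] at h1
    exact h1
  have hGn_le_U : ∀ i, Gn i ≤ U := fun i => hGle _
  have hGn_inv : ∀ i, Submodule.map h (Gn i) ≤ Gn i := fun i => hGinv _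
  have hGn0 : Gn 0 = ⊥ := by
    have h1 : (⟨min 0 k, by omega⟩ : Fin (k+1)) = 0 := by
      apply Fin.ext
      show min 0 k = (0 : Fin (k+1)).val
      simp
    show G ⟨min 0 k, by omega⟩ = ⊥
    rw [h1, hG0]
  have key : ∀ t, t ≤ k → ∃ Fc : ℕ → Submodule ℂ (Fin n → ℂ),
      (∀ i j, i ≤ j → j ≤ t → Fc i ≤ Fc j) ∧
      (∀ i, i ≤ t → finrank ℂ (Fc i) = r - s + i ∧
        Submodule.map f (Fc i) ≤ Gn i ∧ Submodule.map g (Gn i) ≤ Fc i) := by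
    intro t
    induction t with
    | zero =>
      intro _
      have hker_rank : r - s ≤ finrank ℂ (LinearMap.ker f) := by omega
      obtain ⟨C, -, hCker, hCrank⟩ :=
        my_exists_between (bot_le : ⊥ ≤ LinearMap.ker f) (by simp) hker_rank
      refine ⟨fun _ => C, fun i j _ _ => le_rfl, ?_⟩
      rintro i hi
      interval_cases i
      refine ⟨by simpa using hCrank, ?_, ?_⟩
      · rintro y ⟨x, hx, rfl⟩
        have : f x = 0 := LinearMap.mem_ker.mp (hCker hx)
        rw [this, hGn0]
        exact Submodule.zero_mem ⊥
      · rw [hGn0, Submodule.map_bot]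
        exact bot_le
    | succ t iht =>
      intro ht
      obtain ⟨Fc, hFmono, hFprop⟩ := iht (by omega)
      obtain ⟨hFt_rank, hFt_f, hFt_g⟩ := hFprop t le_rfl
      have hGt_rank : finrank ℂ (Gn t) = t := hGn_rank t (by omega)
      have hGt1_rank : finrank ℂ (Gn (t+1)) = t + 1 := hGn_rank (t+1) ht
      have hlt : Gn t < Gn (t+1) := by
        refine lt_of_le_of_ne (hGn_mono t (t+1) (by omega)) (fun hEq => ?_)
        rw [hEq] at hGt_rank
        omega
      obtain ⟨w, hw1, hw2⟩ := SetLike.exists_of_lt hlt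
      have hw0 : w ≠ 0 := fun hw => hw2 (hw ▸ (Gn t).zero_mem)
      have hinfw : Gn t ⊓ (ℂ ∙ w) = ⊥ := by
        rw [eq_bot_iff]
        rintro y ⟨hyC, hySpan⟩
        obtain ⟨c, rfl⟩ := Submodule.mem_span_singleton.mp hySpan
        rcases eq_or_ne c 0 with rfl | hc
        · simp
        · exact absurd (by simpa [hc] using (Gn t).smul_mem c⁻¹ hyC) hw2
      have hGnsup : Gn (t+1) = Gn t ⊔ (ℂ ∙ w) := by
        symm
        apply Submodule.eq_of_le_of_finrank_le
          (sup_le (hGn_mono t (t+1) (by omega))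
            ((Submodule.span_singleton_le_iff_mem w _).mpr hw1))
        have hsum := Submodule.finrank_sup_add_finrank_inf_eq (Gn t) (ℂ ∙ w)
        rw [hinfw, finrank_bot, hGt_rank, finrank_span_singleton hw0] at hsum
        omega
      set B := Fc t ⊔ Submodule.map g (Gn (t+1)) with hB
      set A := Submodule.comap f (Gn (t+1)) with hA
      have hBA : B ≤ A := by
        apply sup_le
        · exact Submodule.map_le_iff_le_comap.mp (le_trans hFt_f (hGn_mono t (t+1) (by omega)))
        · apply Submodule.map_le_iff_le_comap.mp
          rw [← Submodule.map_comp]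
          exact hGn_inv (t+1)
      have hBrank : finrank ℂ B ≤ r - s + (t+1) := by
        have hBle : B ≤ Fc t ⊔ (ℂ ∙ (g w)) := by
          rw [hB, hGnsup, Submodule.map_sup]
          refine sup_le le_sup_left (sup_le (le_trans hFt_g le_sup_left) ?_)
          rw [Submodule.map_span, Set.image_singleton]
          exact le_sup_right
        have h1 : finrank ℂ (Fc t ⊔ (ℂ ∙ (g w)) : Submodule ℂ (Fin n → ℂ)) ≤
            finrank ℂ (Fc t) + finrank ℂ (ℂ ∙ (g w) : Submodule ℂ (Fin n → ℂ)) :=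
          Submodule.finrank_add_le_finrank_add_finrank _ _
        have h2 : finrank ℂ (ℂ ∙ (g w) : Submodule ℂ (Fin n → ℂ)) ≤ 1 := by
          rcases eq_or_ne (g w) 0 with hgw | hgw
          · rw [hgw, Submodule.span_singleton_eq_bot.mpr rfl, finrank_bot]; omega
          · rw [finrank_span_singleton hgw]
        have h3 := Submodule.finrank_mono hBle
        omega
      have hArank : r - s + (t+1) ≤ finrank ℂ A := by
        have e1 : finrank ℂ A = finrank ℂ ((Gn (t+1)) ⊓ W : Submodule ℂ (Fin m → ℂ)) +
            finrank ℂ (LinearMap.ker f) := my_finrank_comap f (Gn (t+1))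
        have e2 := Submodule.finrank_sup_add_finrank_inf_eq (Gn (t+1)) W
        have e3 : finrank ℂ ((Gn (t+1)) ⊔ W : Submodule ℂ (Fin m → ℂ)) ≤ k := by
          rw [← hUrank]
          exact Submodule.finrank_mono (sup_le (hGn_le_U (t+1)) hWU)
        rw [hGt1_rank] at e2
        omega
      obtain ⟨Cn, hBC, hCA, hCrank⟩ := my_exists_between hBA hBrank hArank
      set Fn : ℕ → Submodule ℂ (Fin n → ℂ) := fun i => if i ≤ t then Fc i else Cn with hFndef
      have hFnpos : ∀ i, i ≤ t → Fn i = Fc i := fun i hi => if_pos hi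
      have hFnneg : ∀ i, ¬ i ≤ t → Fn i = Cn := fun i hi => if_neg hi
      refine ⟨Fn, ?_, ?_⟩
      · intro i j hij hj
        by_cases hi' : i ≤ t
        · by_cases hj' : j ≤ t
          · rw [hFnpos i hi', hFnpos j hj']
            exact hFmono i j hij hj'
          · rw [hFnpos i hi', hFnneg j hj']
            exact le_trans (hFmono i t hi' le_rfl) (le_trans le_sup_left hBC)
        · have hj' : ¬ j ≤ t := by omega
          rw [hFnneg i hi', hFnneg j hj']
      · intro i hi
        by_cases hi' : i ≤ t
        · rw [hFnpos i hi']
          exact hFprop i hi'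
        · have hieq : i = t + 1 := by omega
          subst hieq
          rw [hFnneg _ hi']
          exact ⟨hCrank, Submodule.map_le_iff_le_comap.mpr hCA, le_trans le_sup_right hBC⟩
  obtain ⟨Fc, hFmono, hFprop⟩ := key k le_rfl
  refine ⟨fun i => Fc (i : ℕ), G, ?_, hGmono, hG0, ?_, hGrank, ?_, ?_, ?_⟩
  · intro i j hij
    exact hFmono _ _ hij (by omega)
  · intro i
    exact (hFprop (i : ℕ) (by omega)).1
  · intro i
    rw [← hGn_eq i]
    exact (hFprop (i : ℕ) (by omega)).2.1
  · intro i
    rw [← hGn_eq i]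
    exact (hFprop (i : ℕ) (by omega)).2.2
  · intro i x hx
    exact hGsc i x hx

end MainAux




/-- Let `V₀ = ℂ^n`, `V₁ = ℂ^m`, `r ≥ s ≥ 0`, `δ = max(m-n+r-s, 0)`. Let `f : V₀ → V₁`
have rank at most `m - δ`, let `g : V₁ → V₀`, and let `λ₁, …, λ_{m-δ}` be the roots,
with multiplicity and in any chosen order, of `χ̄(u) = u^{-δ} det(u - fg)`. Then there
exist chains of subspaces `F_{r-s} ⊆ F_{r-s+1} ⊆ ⋯ ⊆ F_{r-s+(m-δ)} ⊆ V₀` and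
`0 = G₀ ⊆ G₁ ⊆ ⋯ ⊆ G_{m-δ} ⊆ V₁` with `dim F_{r-s+i} = r-s+i`, `dim G_i = i`,
`f(F_{r-s+i}) ⊆ G_i`, `g(G_i) ⊆ F_{r-s+i}`, and `fg` acting on `G_i/G_{i-1}` by the
scalar `λ_i`. -/
theorem stmt14 (n m r s : ℕ) (hrs : s ≤ r)
    (f : (Fin n → ℂ) →ₗ[ℂ] (Fin m → ℂ)) (g : (Fin m → ℂ) →ₗ[ℂ] (Fin n → ℂ))
    (hrank : Module.finrank ℂ (LinearMap.range f) ≤ m - (m + r - (n + s)))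
    (lam : Fin (m - (m + r - (n + s))) → ℂ)
    (hchi : (f ∘ₗ g).charpoly =
      Polynomial.X ^ (m + r - (n + s)) *
        ∏ i : Fin (m - (m + r - (n + s))), (Polynomial.X - Polynomial.C (lam i))) :
    ∃ (F : Fin (m - (m + r - (n + s)) + 1) → Submodule ℂ (Fin n → ℂ))
      (G : Fin (m - (m + r - (n + s)) + 1) → Submodule ℂ (Fin m → ℂ)),
      Monotone F ∧ Monotone G ∧ G 0 = ⊥ ∧
      (∀ i, Module.finrank ℂ (F i) = (r - s) + (i : ℕ)) ∧
      (∀ i, Module.finrank ℂ (G i) = (i : ℕ)) ∧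
      (∀ i, Submodule.map f (F i) ≤ G i) ∧
      (∀ i, Submodule.map g (G i) ≤ F i) ∧
      (∀ i : Fin (m - (m + r - (n + s))),
        ∀ x ∈ G i.succ, f (g x) - lam i • x ∈ G i.castSucc) := by
  exact stmt14_aux n m r s (m + r - (n + s)) (m - (m + r - (n + s))) hrs rfl rfl
    f g hrank lam hchi
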